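/- Let c2, c4 > 0, p ∈ (0,1), p_d > 1, ν_d > 0, and t̄0 ≥ 0. Let D ⊆ [t̄0,∞) be a union of countably many pairwise disjoint intervals [t_k^a, t_k), and suppose the total length of D ∩ [t̄0, t] is at most (t − t̄0)/p_d + ν_d for every t ≥ t̄0. Let y : [t̄0,∞) → ℝ be continuous and nonnegative with y(t̄0) ≤ 1, differentiable at every t except possibly at the endpoints t_k^a, t_k, and suppose that at every point of differentiability, y′(t) ≤ −c2·y(t)^p if t ∉ D, and y′(t) ≤ c4·y(t) if t ∈ D. Then: (i) for every t ≥ t̄0 such that y(s) > 0 for all s ∈ [t̄0, t], one has y(t)^{1−p} ≤ exp(c4(1−p)·((t − t̄0)/p_d + ν_d)) − c2(1−p)·(t − t̄0 − (t − t̄0)/p_d − ν_d); (ii) consequently, if for some t̃ ≥ t̄0 the right-hand side of (i) is ≤ 0 at t̃, then y(t) = 0 for all t ≥ t̃. -/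

import Mathlib

open MeasureTheory Set Filter Topology

/-- If `f` is continuous on `[a,b]` and at every point of `[a,b)` outside a countable
set the right lower Dini derivative is `≤ 0` (in the frequent-slope sense), then `f b ≤ f a`. -/
lemma mono_aux {f : ℝ → ℝ} {a b : ℝ} (hab : a ≤ b) (hf : ContinuousOn f (Icc a b))
    {s : Set ℝ} (hs : s.Countable)
    (hslope : ∀ x ∈ Ico a b, x ∉ s → ∀ ε > 0, ∃ᶠ z in 𝓝[>] x, f z ≤ f x + ε * (z - x)) :
    f b ≤ f a := by
  rcases eq_or_lt_of_le hab with rfl | hab'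
  · exact le_rfl
  refine le_of_forall_pos_le_add fun δ δpos => ?_
  have hbapos : (0:ℝ) < b - a + 3 := by linarith
  set ε : ℝ := δ / (b - a + 3) with hε
  have εpos : 0 < ε := div_pos δpos hbapos
  obtain ⟨e, he⟩ : ∃ e : ℕ → ℝ, insert (b+1) s = range e :=
    (hs.insert (b+1)).exists_eq_range (insert_nonempty _ _)
  have hse : s ⊆ range e := he ▸ subset_insert _ _
  set c : ℝ → ℕ → ℝ := fun x n => if e n < x then ε * (1/2)^n else 0 with hc
  have hc_nonneg : ∀ x n, 0 ≤ c x n := by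
    intro x n; by_cases h : e n < x <;> simp [hc, h] <;> positivity
  have hc_le : ∀ x n, c x n ≤ ε * (1/2)^n := by
    intro x n; by_cases h : e n < x <;> simp [hc, h]; positivity
  have hgeom : Summable (fun n : ℕ => ε * (1/2)^n) :=
    (summable_geometric_of_lt_one (by norm_num) (by norm_num)).mul_left ε
  have hcsum : ∀ x, Summable (c x) := fun x =>
    Summable.of_nonneg_of_le (hc_nonneg x) (hc_le x) hgeom
  set H : ℝ → ℝ := fun x => ∑' n, c x n with hH
  have hH_nonneg : ∀ x, 0 ≤ H x := fun x => tsum_nonneg (hc_nonneg x)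
  have hH_le : ∀ x, H x ≤ 2 * ε := by
    intro x
    calc H x ≤ ∑' n, ε * (1/2)^n := Summable.tsum_le_tsum (hc_le x) (hcsum x) hgeom
    _ = ε * (1 - 1/2)⁻¹ := by
        rw [tsum_mul_left, tsum_geometric_of_lt_one (by norm_num) (by norm_num)]
    _ = 2 * ε := by ring
  have hH_mono : ∀ {x z : ℝ}, x ≤ z → H x ≤ H z := by
    intro x z hxz
    refine Summable.tsum_le_tsum (fun n => ?_) (hcsum x) (hcsum z)
    by_cases h : e n < x
    · simp [hc, h, h.trans_le hxz]
    · simpa [hc, h] using hc_nonneg z n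
  have hH_jump : ∀ (n : ℕ) (z : ℝ), e n < z → H (e n) + ε * (1/2)^n ≤ H z := by
    intro n z hz
    have hsum2 : Summable (fun m : ℕ => if m = n then ε * (1/2)^n else 0) :=
      (hasSum_ite_eq n (ε * (1/2)^n)).summable
    have h1 : H (e n) + ε * (1/2)^n
        = ∑' m, (c (e n) m + if m = n then ε * (1/2)^n else 0) := by
      rw [Summable.tsum_add (hcsum _) hsum2, tsum_ite_eq]
    rw [h1]
    refine Summable.tsum_le_tsum (fun m => ?_) ((hcsum _).add hsum2) (hcsum z)
    rcases eq_or_ne m n with rfl | hmn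
    · simp [hc, lt_irrefl, hz]
    · simp only [hmn, if_neg hmn, add_zero]
      by_cases h : e m < e n
      · simp [hc, h, h.trans hz]
      · simpa [hc, h] using hc_nonneg z m
  set T : Set ℝ := {x | x ∈ Icc a b ∧ f x ≤ f a + ε * (x - a) + H x} with hT
  have haT : a ∈ T := by
    refine ⟨⟨le_rfl, hab⟩, ?_⟩
    have := hH_nonneg a
    nlinarith
  have hTsub : ∀ x ∈ T, x ≤ b := fun x hx => hx.1.2
  have hTbdd : BddAbove T := ⟨b, hTsub⟩
  have hTne : T.Nonempty := ⟨a, haT⟩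
  set c0 := sSup T with hc0
  have hlub : IsLUB T c0 := isLUB_csSup hTne hTbdd
  have hac : a ≤ c0 := hlub.1 haT
  have hcb : c0 ≤ b := hlub.2 hTsub
  have hc0cl : c0 ∈ closure T := hlub.mem_closure hTne
  have hc0T : c0 ∈ T := by
    refine ⟨⟨hac, hcb⟩, ?_⟩
    have hne : (𝓝[T] c0).NeBot := mem_closure_iff_nhdsWithin_neBot.1 hc0cl
    have htend : Tendsto f (𝓝[T] c0) (𝓝 (f c0)) :=
      (hf c0 ⟨hac, hcb⟩).mono (fun x hx => hx.1)
    refine le_of_tendsto htend (eventually_nhdsWithin_of_forall fun x hx => ?_)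
    have h1 : x ≤ c0 := hlub.1 hx
    have h2 := hH_mono h1
    have h3 := hx.2
    nlinarith
  have hc0b : c0 = b := by
    by_contra hnec
    have hc0lt : c0 < b := lt_of_le_of_ne hcb hnec
    have hex : ∃ z, z ∈ T ∧ c0 < z := by
      by_cases hmem : c0 ∈ range e
      · obtain ⟨n, hn⟩ := hmem
        have hcl : c0 ∈ closure (Ioc c0 b) := by
          rw [closure_Ioc hc0lt.ne]; exact ⟨le_rfl, hc0lt.le⟩
        have hneb : (𝓝[Ioc c0 b] c0).NeBot := mem_closure_iff_nhdsWithin_neBot.1 hcl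
        have htend : Tendsto f (𝓝[Ioc c0 b] c0) (𝓝 (f c0)) :=
          (hf c0 ⟨hac, hcb⟩).mono (fun x hx => ⟨hac.trans hx.1.le, hx.2⟩)
        have hev : ∀ᶠ z in 𝓝[Ioc c0 b] c0, f z < f c0 + ε * (1/2)^n := by
          apply htend.eventually_lt_const
          have : 0 < ε * (1/2)^n := by positivity
          linarith
        obtain ⟨z, hz1, hz2⟩ := (hev.and (eventually_mem_nhdsWithin)).exists
        refine ⟨z, ⟨⟨hac.trans hz2.1.le, hz2.2⟩, ?_⟩, hz2.1⟩
        have hjump := hH_jump n z (hn ▸ hz2.1)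
        rw [hn] at hjump
        have h3 := hc0T.2
        have h4 : ε * (c0 - a) ≤ ε * (z - a) := by nlinarith [hz2.1.le]
        linarith
      · have hns : c0 ∉ s := fun h => hmem (hse h)
        have hfreq := hslope c0 ⟨hac, hc0lt⟩ hns ε εpos
        have hev : ∀ᶠ z in 𝓝[>] c0, z ∈ Ioc c0 b := Ioc_mem_nhdsGT_of_mem ⟨le_rfl, hc0lt⟩
        obtain ⟨z, hz1, hz2⟩ := (hfreq.and_eventually hev).exists
        refine ⟨z, ⟨⟨hac.trans hz2.1.le, hz2.2⟩, ?_⟩, hz2.1⟩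
        have h3 := hc0T.2
        have h5 := hH_mono hz2.1.le
        linarith
    obtain ⟨z, hzT, hzgt⟩ := hex
    exact absurd (hlub.1 hzT) (not_le.2 hzgt)
  have hb : f b ≤ f a + ε * (b - a) + H b := by
    have := hc0T.2; rw [hc0b] at this; exact this
  have h2e := hH_le b
  have hcan : ε * (b - a + 3) = δ := div_mul_cancel₀ δ hbapos.ne'
  nlinarith

/-- Eventually-small right slopes from a nonpositive derivative. -/
lemma slope_aux {G : ℝ → ℝ} {g' x : ℝ} (hG : HasDerivAt G g' x) (hg : g' ≤ 0) {ε : ℝ}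
    (hε : 0 < ε) : ∀ᶠ z in 𝓝[>] x, G z ≤ G x + ε * (z - x) := by
  have h := hasDerivAt_iff_tendsto_slope.1 hG
  have h2 : ∀ᶠ z in 𝓝[≠] x, slope G x z < ε :=
    h.eventually_lt_const (lt_of_le_of_lt hg hε)
  have h3 : 𝓝[>] x ≤ 𝓝[≠] x := nhdsWithin_mono x (fun z hz => ne_of_gt hz)
  filter_upwards [h3 h2, self_mem_nhdsWithin] with z hz hz2
  have hzx : (0:ℝ) < z - x := sub_pos.2 hz2
  rw [slope_def_field, div_lt_iff₀ hzx] at hz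
  linarith

set_option maxHeartbeats 4000000 in
theorem stmt_10 (c2 c4 p pd νd t0 : ℝ) (hc2 : 0 < c2) (hc4 : 0 < c4)
    (hp0 : 0 < p) (hp1 : p < 1) (hpd : 1 < pd) (hνd : 0 < νd) (ht0 : 0 ≤ t0)
    (ta tb : ℕ → ℝ) (hta : ∀ k, t0 ≤ ta k) (hord : ∀ k, ta k ≤ tb k)
    (hdisj : ∀ k l, k ≠ l → Disjoint (Ico (ta k) (tb k)) (Ico (ta l) (tb l)))
    (D : Set ℝ) (hD : D = ⋃ k, Ico (ta k) (tb k))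
    (hdur : ∀ t : ℝ, t0 ≤ t → (volume (D ∩ Icc t0 t)).toReal ≤ (t - t0) / pd + νd)
    (y : ℝ → ℝ)
    (hcont : ContinuousOn y (Ici t0))
    (hynn : ∀ t : ℝ, t0 ≤ t → 0 ≤ y t)
    (hy0 : y t0 ≤ 1)
    (hdiff : ∀ t : ℝ, t0 ≤ t → (∀ k, t ≠ ta k ∧ t ≠ tb k) → DifferentiableAt ℝ y t)
    (hoff : ∀ t : ℝ, t0 ≤ t → DifferentiableAt ℝ y t → t ∉ D →
      deriv y t ≤ -c2 * y t ^ p)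
    (hon : ∀ t : ℝ, t0 ≤ t → DifferentiableAt ℝ y t → t ∈ D →
      deriv y t ≤ c4 * y t) :
    (∀ t : ℝ, t0 ≤ t → (∀ s ∈ Icc t0 t, 0 < y s) →
      y t ^ (1 - p) ≤
        Real.exp (c4 * (1 - p) * ((t - t0) / pd + νd))
          - c2 * (1 - p) * (t - t0 - (t - t0) / pd - νd)) ∧
    (∀ ttil : ℝ, t0 ≤ ttil →
      Real.exp (c4 * (1 - p) * ((ttil - t0) / pd + νd))
          - c2 * (1 - p) * (ttil - t0 - (ttil - t0) / pd - νd) ≤ 0 →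
      ∀ t : ℝ, ttil ≤ t → y t = 0) := by
  have hp1' : (0:ℝ) ≤ 1 - p := by linarith
  set K := c4 * (1 - p) with hK
  set C := c2 * (1 - p) with hC
  have hKpos : 0 < K := mul_pos hc4 (by linarith)
  have hCpos : 0 < C := mul_pos hc2 (by linarith)
  set m : ℝ → ℝ := fun t => (volume (D ∩ Icc t0 t)).toReal with hm
  have hfin : ∀ u : ℝ, volume (D ∩ Icc t0 u) < ⊤ := by
    intro u
    calc volume (D ∩ Icc t0 u) ≤ volume (Icc t0 u) := measure_mono inter_subset_right
    _ < ⊤ := by rw [Real.volume_Icc]; exact ENNReal.ofReal_lt_top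
  have hm0 : m t0 = 0 := by
    have : volume (D ∩ Icc t0 t0) ≤ volume {t0} := by
      apply measure_mono; exact inter_subset_right.trans (by rw [Icc_self])
    simp only [Real.volume_singleton, nonpos_iff_eq_zero] at this
    rw [Icc_self] at this
    simp [hm, this]
  have hmono : ∀ {t s : ℝ}, t ≤ s → m t ≤ m s := by
    intro t s hts
    exact ENNReal.toReal_mono (hfin s).ne
      (measure_mono (inter_subset_inter_right _ (Icc_subset_Icc_right hts)))
  have hlip : ∀ {t s : ℝ}, t ≤ s → m s - m t ≤ s - t := by
    intro t s hts
    have hsub : D ∩ Icc t0 s ⊆ (D ∩ Icc t0 t) ∪ Ioc t s := by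
      rintro u ⟨huD, hu0, hus⟩
      rcases le_or_gt u t with h | h
      · exact Or.inl ⟨huD, hu0, h⟩
      · exact Or.inr ⟨h, hus⟩
    have h1 : volume (D ∩ Icc t0 s) ≤ volume (D ∩ Icc t0 t) + volume (Ioc t s) :=
      (measure_mono hsub).trans (measure_union_le _ _)
    have h2 : (volume (Ioc t s)).toReal = s - t := by
      rw [Real.volume_Ioc, ENNReal.toReal_ofReal (by linarith)]
    have h3 : m s ≤ m t + (s - t) := by
      rw [hm]
      calc (volume (D ∩ Icc t0 s)).toReal
          ≤ (volume (D ∩ Icc t0 t) + volume (Ioc t s)).toReal :=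
            ENNReal.toReal_mono (by
              refine ENNReal.add_ne_top.2 ⟨(hfin t).ne, ?_⟩
              rw [Real.volume_Ioc]; exact ENNReal.ofReal_ne_top) h1
      _ = m t + (s - t) := by
          rw [ENNReal.toReal_add (hfin t).ne
            (by rw [Real.volume_Ioc]; exact ENNReal.ofReal_ne_top), h2]
    linarith
  have hflat : ∀ (k : ℕ) {t s : ℝ}, t0 ≤ t → ta k ≤ t → t ≤ s → s ≤ tb k →
      m s = m t + (s - t) := by
    intro k t s ht0' hAt hts hsB
    have hID : Ico (ta k) (tb k) ⊆ D := by rw [hD]; exact subset_iUnion (fun j => Ico (ta j) (tb j)) k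
    have hge : m t + (s - t) ≤ m s := by
      have hsub : (D ∩ Icc t0 t) ∪ Ioo t s ⊆ D ∩ Icc t0 s := by
        rintro u (⟨huD, hu0, hut⟩ | ⟨h1, h2⟩)
        · exact ⟨huD, hu0, hut.trans hts⟩
        · exact ⟨hID ⟨hAt.trans h1.le, h2.trans_le hsB⟩, le_trans ht0' h1.le, h2.le⟩
      have hdisj2 : Disjoint (D ∩ Icc t0 t) (Ioo t s) := by
        apply Set.disjoint_left.2
        rintro u ⟨_, _, hut⟩ ⟨h1, _⟩
        exact absurd h1 (not_lt.2 hut)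
      have h1 : volume (D ∩ Icc t0 t) + volume (Ioo t s) ≤ volume (D ∩ Icc t0 s) := by
        rw [← measure_union hdisj2 measurableSet_Ioo]
        exact measure_mono hsub
      have h2 := ENNReal.toReal_mono (hfin s).ne h1
      rw [ENNReal.toReal_add (hfin t).ne (by rw [Real.volume_Ioo]; exact ENNReal.ofReal_ne_top),
        Real.volume_Ioo, ENNReal.toReal_ofReal (by linarith)] at h2
      exact h2
    have hle := hlip hts
    linarith
  have hmcont : Continuous m := by
    have : LipschitzWith 1 m := by
      apply LipschitzWith.of_dist_le_mul
      intro x y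
      rw [Real.dist_eq, Real.dist_eq, NNReal.coe_one, one_mul]
      rcases le_total x y with h | h
      · rw [abs_sub_comm, abs_of_nonneg (by linarith [hmono h]), abs_of_nonpos (by linarith)]
        have := hlip h; linarith
      · rw [abs_of_nonneg (by linarith [hmono h]), abs_of_nonneg (by linarith)]
        exact hlip h
    exact this.continuous
  set l : ℝ → ℝ := fun t => (t - t0) - m t with hl
  have hlnn : ∀ t, t0 ≤ t → 0 ≤ l t := by
    intro t ht
    have := hlip ht
    rw [hm0] at this
    simp only [hl]
    linarith
  have hcnt : (range ta ∪ range tb).Countable :=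
    (countable_range ta).union (countable_range tb)
  -- Part (i)
  have main1 : ∀ t : ℝ, t0 ≤ t → (∀ s ∈ Icc t0 t, 0 < y s) →
      y t ^ (1 - p) ≤ Real.exp (c4 * (1 - p) * ((t - t0) / pd + νd))
        - c2 * (1 - p) * (t - t0 - (t - t0) / pd - νd) := by
    intro T hT hpos
    set W : ℝ → ℝ := fun u => y u ^ (1 - p) with hW
    have hWpos : ∀ u ∈ Icc t0 T, 0 < W u := fun u hu => Real.rpow_pos_of_pos (hpos u hu) _
    set F : ℝ → ℝ := fun u => Real.log (W u + C * l u) - K * m u with hF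
    have hargpos : ∀ u ∈ Icc t0 T, 0 < W u + C * l u := fun u hu =>
      add_pos_of_pos_of_nonneg (hWpos u hu) (mul_nonneg hCpos.le (hlnn u hu.1))
    have hFcont : ContinuousOn F (Icc t0 T) := by
      apply ContinuousOn.sub
      · apply ContinuousOn.log
        · apply ContinuousOn.add
          · exact (hcont.mono Icc_subset_Ici_self).rpow_const (fun u _ => Or.inr hp1')
          · exact continuousOn_const.mul
              (((continuousOn_id.sub continuousOn_const).sub hmcont.continuousOn))
        · exact fun u hu => (hargpos u hu).ne'
      · exact continuousOn_const.mul hmcont.continuousOn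
    have hslope : ∀ x ∈ Ico t0 T, x ∉ (range ta ∪ range tb) → ∀ ε > 0,
        ∃ᶠ z in 𝓝[>] x, F z ≤ F x + ε * (z - x) := by
      intro x hx hxs ε hε
      have hxI : x ∈ Icc t0 T := ⟨hx.1, hx.2.le⟩
      have hyx : 0 < y x := hpos x hxI
      have hydiff : DifferentiableAt ℝ y x := by
        refine hdiff x hx.1 (fun k => ⟨fun h => hxs (Or.inl ⟨k, h.symm⟩),
          fun h => hxs (Or.inr ⟨k, h.symm⟩)⟩)
      have hyW : HasDerivAt (fun u => y u ^ (1-p)) (deriv y x * (1-p) * y x ^ (1-p-1)) x :=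
        (hydiff.hasDerivAt).rpow_const (Or.inl hyx.ne')
      set W' := deriv y x * (1-p) * y x ^ (1-p-1) with hW'
      have hA : 0 < W x + C * l x := hargpos x hxI
      have hAeq : y x ^ (1-p) + C * l x = W x + C * l x := rfl
      apply Filter.Eventually.frequently
      by_cases hxD : x ∈ D
      · -- on an attack interval
        obtain ⟨k, hk⟩ : ∃ k, x ∈ Ico (ta k) (tb k) := by
          rw [hD] at hxD; exact mem_iUnion.1 hxD
        have hderiv_le : deriv y x ≤ c4 * y x := hon x hx.1 hydiff hxD
        have hyy : y x * y x ^ (1-p-1) = W x := by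
          have h0 : (1:ℝ) + (1-p-1) = 1-p := by ring
          rw [hW]
          nth_rewrite 1 [← Real.rpow_one (y x)]
          rw [← Real.rpow_add hyx, h0]
        have hWle : W' ≤ K * W x := by
          have h1 : deriv y x * ((1-p) * y x ^ (1-p-1)) ≤ (c4 * y x) * ((1-p) * y x ^ (1-p-1)) :=
            mul_le_mul_of_nonneg_right hderiv_le
              (mul_nonneg hp1' (Real.rpow_nonneg hyx.le _))
          calc W' = deriv y x * ((1-p) * y x ^ (1-p-1)) := by rw [hW']; ring
          _ ≤ (c4 * y x) * ((1-p) * y x ^ (1-p-1)) := h1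
          _ = K * (y x * y x ^ (1-p-1)) := by rw [hK]; ring
          _ = K * W x := by rw [hyy]
        set G : ℝ → ℝ := fun z => Real.log (y z ^ (1-p) + C * l x) - K * (z - x) with hG
        have hGderiv : HasDerivAt G (W' / (W x + C * l x) - K) x := by
          apply HasDerivAt.sub
          · have := (hyW.add_const (C * l x)).log (by rw [hAeq]; exact hA.ne')
            rw [hAeq] at this
            exact this
          · simpa using ((hasDerivAt_id x).sub_const x).const_mul K
        have hG' : W' / (W x + C * l x) - K ≤ 0 := by
          rw [sub_nonpos, div_le_iff₀ hA]
          have hCl : 0 ≤ C * l x := mul_nonneg hCpos.le (hlnn x hxI.1)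
          nlinarith
        have hev1 := slope_aux hGderiv hG' hε
        have hev2 : ∀ᶠ z in 𝓝[>] x, z ∈ Ioo x (tb k) :=
          Ioo_mem_nhdsGT_of_mem ⟨le_rfl, hk.2⟩
        have hev3 : ∀ᶠ z in 𝓝[>] x, z ∈ Ioc x T := Ioc_mem_nhdsGT_of_mem ⟨le_rfl, hx.2⟩
        filter_upwards [hev1, hev2, hev3] with z hz1 hz2 hz3
        have hmz : m z = m x + (z - x) := hflat k hx.1 hk.1 hz2.1.le hz2.2.le
        have hlz : l z = l x := by simp only [hl]; rw [hmz]; ring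
        have hFz : F z = G z + K * (z - x) - K * m z := by
          simp only [hF, hG, hW, hlz]; ring
        have hFx : F x = G x - K * m x := by
          simp only [hF, hG, hW]; ring
        rw [hFz, hFx, hmz]
        simp only [hG] at hz1 ⊢
        linarith
      · -- outside attacks
        have hderiv_le : deriv y x ≤ -c2 * y x ^ p := hoff x hx.1 hydiff hxD
        have hWle : W' ≤ -C := by
          have h1 : deriv y x * ((1-p) * y x ^ (1-p-1))
              ≤ (-c2 * y x ^ p) * ((1-p) * y x ^ (1-p-1)) :=
            mul_le_mul_of_nonneg_right hderiv_le
              (mul_nonneg hp1' (Real.rpow_nonneg hyx.le _))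
          have hyy : y x ^ p * y x ^ (1-p-1) = 1 := by
            have h0 : p + (1-p-1) = 0 := by ring
            rw [← Real.rpow_add hyx, h0, Real.rpow_zero]
          calc W' = deriv y x * ((1-p) * y x ^ (1-p-1)) := by rw [hW']; ring
          _ ≤ (-c2 * y x ^ p) * ((1-p) * y x ^ (1-p-1)) := h1
          _ = -C * (y x ^ p * y x ^ (1-p-1)) := by rw [hC]; ring
          _ = -C := by rw [hyy, mul_one]
        set G : ℝ → ℝ := fun z => Real.log (y z ^ (1-p) + C * l x + C * (z - x)) with hG
        have hGderiv : HasDerivAt G ((W' + C) / (W x + C * l x)) x := by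
          have h1 : HasDerivAt (fun z => y z ^ (1-p) + C * l x + C * (z - x)) (W' + C) x := by
            have h2 : HasDerivAt (fun z : ℝ => C * (z - x)) C x := by
              simpa using ((hasDerivAt_id x).sub_const x).const_mul C
            exact (hyW.add_const (C * l x)).add h2
          have h3 := h1.log (by simp only [sub_self, mul_zero, add_zero, hAeq]; exact hA.ne')
          simpa [hAeq] using h3
        have hG' : (W' + C) / (W x + C * l x) ≤ 0 :=
          div_nonpos_of_nonpos_of_nonneg (by linarith) hA.le
        have hev1 := slope_aux hGderiv hG' hε
        have hev3 : ∀ᶠ z in 𝓝[>] x, z ∈ Ioc x T := Ioc_mem_nhdsGT_of_mem ⟨le_rfl, hx.2⟩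
        filter_upwards [hev1, hev3] with z hz1 hz3
        have hzI : z ∈ Icc t0 T := ⟨hx.1.trans hz3.1.le, hz3.2⟩
        have hlle : l z ≤ l x + (z - x) := by
          have := hmono hz3.1.le
          simp only [hl]; linarith
        have h1 : W z + C * l z ≤ y z ^ (1-p) + C * l x + C * (z - x) := by
          have h2 : C * l z ≤ C * (l x + (z - x)) := mul_le_mul_of_nonneg_left hlle hCpos.le
          simp only [hW]; nlinarith
        have h2 : Real.log (W z + C * l z) ≤ G z := by
          apply Real.log_le_log (hargpos z hzI) h1
        have hGx : G x = Real.log (W x + C * l x) := by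
          simp only [hG, sub_self, mul_zero, add_zero, hAeq]
        have hmm : m x ≤ m z := hmono hz3.1.le
        simp only [hF]
        have h4 : K * m x ≤ K * m z := mul_le_mul_of_nonneg_left hmm hKpos.le
        have h5 := hz1
        rw [hGx] at h5
        linarith
    have hmainF : F T ≤ F t0 := mono_aux hT hFcont hcnt hslope
    have hlt0 : l t0 = 0 := by simp only [hl]; rw [hm0]; ring
    have hFt0 : F t0 = Real.log (W t0) := by
      simp only [hF]; rw [hlt0, hm0]; ring_nf
    have hWt0 : W t0 ≤ 1 := Real.rpow_le_one (hynn t0 le_rfl) hy0 hp1'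
    have hlog0 : Real.log (W t0) ≤ 0 := Real.log_nonpos (hynn t0 le_rfl |> fun h => by
      exact Real.rpow_nonneg h _) hWt0
    have hFT : Real.log (W T + C * l T) ≤ K * m T := by
      have := hmainF
      rw [hFt0] at this
      simp only [hF] at this
      linarith
    have hexp : W T + C * l T ≤ Real.exp (K * m T) := by
      rw [← Real.exp_log (hargpos T ⟨hT, le_rfl⟩)]
      exact Real.exp_le_exp.2 hFT
    have hmT := hdur T hT
    have hmT' : m T ≤ (T - t0) / pd + νd := hmT
    have hexp2 : Real.exp (K * m T) ≤ Real.exp (K * ((T - t0) / pd + νd)) :=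
      Real.exp_le_exp.2 (mul_le_mul_of_nonneg_left hmT' hKpos.le)
    have hCm : C * m T ≤ C * ((T - t0) / pd + νd) := mul_le_mul_of_nonneg_left hmT' hCpos.le
    have hgoal : W T ≤ Real.exp (K * ((T - t0) / pd + νd))
        - C * (T - t0 - (T - t0) / pd - νd) := by
      have hlT : C * l T = C * (T - t0) - C * m T := by simp only [hl]; ring
      nlinarith
    simpa [hW, hK, hC] using hgoal
  refine ⟨main1, ?_⟩
  intro ttil httl hrhs t htt
  rw [hK, hC] at hrhs
  have ht0t : t0 ≤ t := httl.trans htt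
  have hzero : ∃ s0, s0 ∈ Icc t0 ttil ∧ y s0 = 0 := by
    by_contra h
    push_neg at h
    have hpos : ∀ s ∈ Icc t0 ttil, 0 < y s := fun s hs =>
      lt_of_le_of_ne (hynn s hs.1) (Ne.symm (h s hs))
    have h1 := main1 ttil httl hpos
    have h2 : 0 < y ttil ^ (1-p) := Real.rpow_pos_of_pos (hpos ttil ⟨httl, le_rfl⟩) _
    rw [← hK, ← hC] at h1 hrhs
    linarith
  obtain ⟨s0, hs0I, hs0⟩ := hzero
  have hs0t : s0 ≤ t := hs0I.2.trans htt
  set g : ℝ → ℝ := fun u => y u * Real.exp (-(c4 * u)) with hg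
  have hgcont : ContinuousOn g (Icc s0 t) :=
    (hcont.mono (fun u hu => hs0I.1.trans hu.1)).mul
      (Continuous.continuousOn
        (Real.continuous_exp.comp ((continuous_const.mul continuous_id).neg)))
  have hgslope : ∀ x ∈ Ico s0 t, x ∉ (range ta ∪ range tb) → ∀ ε > 0,
      ∃ᶠ z in 𝓝[>] x, g z ≤ g x + ε * (z - x) := by
    intro x hx hxs ε hε
    have hx0 : t0 ≤ x := hs0I.1.trans hx.1
    have hydiff : DifferentiableAt ℝ y x := by
      refine hdiff x hx0 (fun k => ⟨fun h => hxs (Or.inl ⟨k, h.symm⟩),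
        fun h => hxs (Or.inr ⟨k, h.symm⟩)⟩)
    have hd : deriv y x ≤ c4 * y x := by
      by_cases hxD : x ∈ D
      · exact hon x hx0 hydiff hxD
      · have h1 := hoff x hx0 hydiff hxD
        have h2 : 0 ≤ y x ^ p := Real.rpow_nonneg (hynn x hx0) p
        have h3 : 0 ≤ c4 * y x := mul_nonneg hc4.le (hynn x hx0)
        nlinarith
    have hgderiv : HasDerivAt g
        (deriv y x * Real.exp (-(c4 * x)) + y x * (-c4 * Real.exp (-(c4 * x)))) x := by
      apply HasDerivAt.mul hydiff.hasDerivAt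
      have h1 : HasDerivAt (fun u : ℝ => -(c4 * u)) (-c4) x := by
        exact (show HasDerivAt (fun u : ℝ => c4 * u) c4 x by simpa using (hasDerivAt_id x).const_mul c4).neg
      simpa [mul_comm] using h1.exp
    have hg'le : deriv y x * Real.exp (-(c4 * x)) + y x * (-c4 * Real.exp (-(c4 * x))) ≤ 0 := by
      have he := Real.exp_pos (-(c4 * x))
      nlinarith
    exact (slope_aux hgderiv hg'le hε).frequently
  have hfin2 := mono_aux hs0t hgcont hcnt hgslope
  have hgs0 : g s0 = 0 := by simp [hg, hs0]
  rw [hgs0] at hfin2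
  have hynnt := hynn t ht0t
  have hexpp := Real.exp_pos (-(c4 * t))
  simp only [hg] at hfin2
  nlinarith
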